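/- (Combinatorial content of the Both k-near Editing theorem.) Fix initial bijections α₀ : S → {1,…,|S|} and β₀ : Q → {1,…,|Q|} and k ∈ ℕ. The minimum cardinality of an edit set F ⊆ S × Q such that the edited graph (S ∪ Q, E △ F) admits a k-near nested ordering π of the students and a k-near ordering σ of the questions satisfying the interval property equals the minimum, over all k-near bijections π : S → {1,…,|S|}, all k-near bijections σ : Q → {1,…,|Q|}, and all nondecreasing threshold sequences 0 ≤ j₁ ≤ … ≤ j_{|S|} ≤ |Q|, of the sum over i = 1,…,|S| of |N(π⁻¹(i)) △ {σ⁻¹(1),…,σ⁻¹(j_i)}|. -/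

import Mathlib

open Finset

/-- The neighborhood of a student `s` in the bipartite graph with edge set `E`. -/
def nbhd {S Q : Type*} [Fintype Q] [DecidableEq S] [DecidableEq Q]
    (E : Finset (S × Q)) (s : S) : Finset Q :=
  Finset.univ.filter fun q => (s, q) ∈ E

/-- The `j` easiest questions under the ordering `σ` (`j ∈ {0, …, |Q|}`). -/
def prefixSet {Q : Type*} [Fintype Q] [DecidableEq Q]
    (σ : Q ≃ Fin (Fintype.card Q)) (j : ℕ) : Finset Q :=
  Finset.univ.filter fun q => (σ q : ℕ) < j

/-- `π` is a `k`-near ordering with respect to the initial ordering `α₀`. -/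
def kNear {X : Type*} [Fintype X] (α₀ π : X ≃ Fin (Fintype.card X)) (k : ℕ) : Prop :=
  ∀ x : X, ((π x : ℤ) - (α₀ x : ℤ)).natAbs ≤ k

lemma nbhd_symmDiff {S Q : Type*} [Fintype Q] [DecidableEq S] [DecidableEq Q]
    (E F : Finset (S × Q)) (s : S) :
    nbhd (symmDiff E F) s = symmDiff (nbhd E s) (nbhd F s) := by
  ext q
  simp only [nbhd, mem_filter, mem_univ, true_and, Finset.mem_symmDiff]

lemma card_eq_sum_nbhd {S Q : Type*} [Fintype S] [Fintype Q] [DecidableEq S] [DecidableEq Q]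
    (F : Finset (S × Q)) : F.card = ∑ s, (nbhd F s).card := by
  rw [Finset.card_eq_sum_card_fiberwise (f := Prod.fst) (t := univ) (fun x _ => mem_univ _)]
  refine Finset.sum_congr rfl fun s _ => ?_
  refine Finset.card_bij' (fun p _ => p.2) (fun q _ => (s, q)) ?_ ?_ ?_ ?_
  · rintro ⟨a, b⟩ hp
    simp only [mem_filter] at hp
    obtain ⟨h1, h2⟩ := hp
    subst h2
    simp [nbhd, h1]
  · intro q hq
    simp only [nbhd, mem_filter, mem_univ, true_and] at hq
    simp [hq]
  · rintro ⟨a, b⟩ hp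
    simp only [mem_filter] at hp
    simp [hp.2]
  · intro q hq; rfl

lemma prefixSet_mono {Q : Type*} [Fintype Q] [DecidableEq Q]
    (σ : Q ≃ Fin (Fintype.card Q)) {a b : ℕ} (h : a ≤ b) :
    prefixSet σ a ⊆ prefixSet σ b := by
  intro q hq
  simp only [prefixSet, mem_filter, mem_univ, true_and] at hq ⊢
  omega

lemma le_of_prefixSet_subset {Q : Type*} [Fintype Q] [DecidableEq Q]
    (σ : Q ≃ Fin (Fintype.card Q)) {a b : ℕ} (ha : a ≤ Fintype.card Q)
    (h : prefixSet σ a ⊆ prefixSet σ b) : a ≤ b := by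
  by_contra hab
  push_neg at hab
  have hb : b < Fintype.card Q := lt_of_lt_of_le hab ha
  have hmem : σ.symm ⟨b, hb⟩ ∈ prefixSet σ a := by
    simp only [prefixSet, mem_filter, mem_univ, true_and, Equiv.apply_symm_apply]
    exact hab
  have := h hmem
  simp only [prefixSet, mem_filter, mem_univ, true_and, Equiv.apply_symm_apply] at this
  omega

/-- Combinatorial content of the Both `k`-near Editing theorem: the minimum number of edge
edits after which the graph admits a `k`-near nested student ordering and a `k`-near question
ordering with the interval property equals the minimum over `k`-near `π`, `k`-near `σ`, and
nondecreasing threshold sequences of the total per-position editing cost. -/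
theorem stmt10 {S Q : Type*} [Fintype S] [Fintype Q] [DecidableEq S] [DecidableEq Q]
    (E : Finset (S × Q)) (α₀ : S ≃ Fin (Fintype.card S))
    (β₀ : Q ≃ Fin (Fintype.card Q)) (k : ℕ) :
    sInf {c : ℕ | ∃ F : Finset (S × Q), F.card = c ∧
        ∃ π : S ≃ Fin (Fintype.card S), kNear α₀ π k ∧
        ∃ σ : Q ≃ Fin (Fintype.card Q), kNear β₀ σ k ∧
          (∀ s₁ s₂ : S, π s₂ ≤ π s₁ →
            nbhd (symmDiff E F) s₂ ⊆ nbhd (symmDiff E F) s₁) ∧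
          (∀ s : S, ∃ j ≤ Fintype.card Q, nbhd (symmDiff E F) s = prefixSet σ j)} =
    sInf {c : ℕ | ∃ π : S ≃ Fin (Fintype.card S), kNear α₀ π k ∧
        ∃ σ : Q ≃ Fin (Fintype.card Q), kNear β₀ σ k ∧
        ∃ j : Fin (Fintype.card S) → ℕ, Monotone j ∧ (∀ i, j i ≤ Fintype.card Q) ∧
          c = ∑ i : Fin (Fintype.card S),
            (symmDiff (nbhd E (π.symm i)) (prefixSet σ (j i))).card} := by
  congr 1
  ext c
  simp only [Set.mem_setOf_eq]
  constructor
  · rintro ⟨F, rfl, π, hπ, σ, hσ, hnest, hint⟩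
    choose jf hjle hpre using hint
    refine ⟨π, hπ, σ, hσ, fun i => jf (π.symm i), ?_, fun i => hjle _, ?_⟩
    · intro i₁ i₂ h12
      refine le_of_prefixSet_subset σ (hjle _) ?_
      rw [← hpre, ← hpre]
      exact hnest _ _ (by simpa using h12)
    · have key : ∀ s, symmDiff (nbhd E s) (prefixSet σ (jf s)) = nbhd F s := by
        intro s
        rw [← hpre s, nbhd_symmDiff, symmDiff_symmDiff_cancel_left]
      calc F.card = ∑ s, (nbhd F s).card := card_eq_sum_nbhd F
        _ = ∑ i, (nbhd F (π.symm i)).card :=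
            (Equiv.sum_comp π.symm fun s => (nbhd F s).card).symm
        _ = _ := by simp [key]
  · rintro ⟨π, hπ, σ, hσ, j, hmono, hjle, rfl⟩
    set F : Finset (S × Q) :=
      univ.filter fun p : S × Q => p.2 ∈ symmDiff (nbhd E p.1) (prefixSet σ (j (π p.1)))
      with hF
    have hnF : ∀ s, nbhd F s = symmDiff (nbhd E s) (prefixSet σ (j (π s))) := by
      intro s; ext q; show q ∈ Finset.univ.filter _ ↔ _; rw [Finset.mem_filter, hF, Finset.mem_filter]; simp only [Finset.mem_univ, true_and]
    have hedited : ∀ s, nbhd (symmDiff E F) s = prefixSet σ (j (π s)) := by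
      intro s
      rw [nbhd_symmDiff, hnF, symmDiff_symmDiff_cancel_left]
    refine ⟨F, ?_, π, hπ, σ, hσ, ?_, fun s => ⟨j (π s), hjle _, hedited s⟩⟩
    · calc F.card = ∑ s, (nbhd F s).card := card_eq_sum_nbhd F
        _ = ∑ i, (nbhd F (π.symm i)).card :=
            (Equiv.sum_comp π.symm fun s => (nbhd F s).card).symm
        _ = _ := by simp [hnF]
    · intro s₁ s₂ h
      rw [hedited, hedited]
      exact prefixSet_mono σ (hmono h)
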